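/- arXiv:1707.00763 — 4 statements merged into one kernel-verified Lean document; each statement's English description precedes it below -/
import Mathlib

section
/- (Proposition 2.) For all real α, β > 0 and μ_z ∈ ℝ, the pushforward of the Z-distribution Z(α, β, μ_z, 1) on ℝ under the map η ↦ 1/(1 + e^{η}) equals the three-parameter Beta distribution TPB(β, α, exp(μ_z)) on (0, 1). -/
open Real MeasureTheory

/-- The Beta function `B(a, b) = Γ(a) Γ(b) / Γ(a + b)`. -/
noncomputable def realBeta (a b : ℝ) : ℝ := Real.Gamma a * Real.Gamma b / Real.Gamma (a + b)

/-- The `Z`-distribution `Z(α, β, μ, 1)`: the measure on `ℝ` with Lebesgue density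
`z ↦ [B(α, β)]⁻¹ [exp(z−μ)]^α [1 + exp(z−μ)]^{−(α+β)}`. -/
noncomputable def zMeasure (α β μz : ℝ) : Measure ℝ :=
  volume.withDensity
    (fun z => ENNReal.ofReal
      ((realBeta α β)⁻¹ * Real.exp (z - μz) ^ α * (1 + Real.exp (z - μz)) ^ (-(α + β))))

/-- The three-parameter Beta distribution `TPB(β, α, γ)`: the measure on `(0, 1)` with Lebesgue
density `κ ↦ [B(β, α)]⁻¹ γ^β κ^{β−1} (1−κ)^{α−1} [1 + (γ−1)κ]^{−(α+β)}`. -/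
noncomputable def tpbMeasure (β α γ : ℝ) : Measure ℝ :=
  (volume.restrict (Set.Ioo (0:ℝ) 1)).withDensity
    (fun κ => ENNReal.ofReal
      ((realBeta β α)⁻¹ * γ ^ β * κ ^ (β - 1) * (1 - κ) ^ (α - 1)
        * (1 + (γ - 1) * κ) ^ (-(α + β))))

/-- one-dimensional lintegral change of variables -/
lemma lintegral_image_eq_lintegral_abs_deriv_mul' {s : Set ℝ} {f f' : ℝ → ℝ}
    (hs : MeasurableSet s) (hf' : ∀ x ∈ s, HasDerivWithinAt f (f' x) s x)
    (hf : Set.InjOn f s) (g : ℝ → ENNReal) :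
    ∫⁻ x in f '' s, g x = ∫⁻ x in s, ENNReal.ofReal |f' x| * g (f x) := by
  simpa only [ContinuousLinearMap.det_toSpanSingleton] using
    lintegral_image_eq_lintegral_abs_det_fderiv_mul volume hs
      (fun x hx => (hf' x hx).hasFDerivWithinAt) hf g

lemma key_real (α β μz κ : ℝ) (hα : 0 < α) (hβ : 0 < β) (h0 : 0 < κ) (h1 : κ < 1) :
    |-(1 / (κ * (1 - κ)))| *
      ((realBeta α β)⁻¹ * Real.exp (Real.log ((1 - κ) / κ) - μz) ^ α *
        (1 + Real.exp (Real.log ((1 - κ) / κ) - μz)) ^ (-(α + β)))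
    = (realBeta β α)⁻¹ * Real.exp μz ^ β * κ ^ (β - 1) * (1 - κ) ^ (α - 1)
        * (1 + (Real.exp μz - 1) * κ) ^ (-(α + β)) := by
  have h1' : 0 < 1 - κ := by linarith
  set γ := Real.exp μz with hγdef
  have hγ : 0 < γ := Real.exp_pos μz
  have hBeq : realBeta α β = realBeta β α := by
    unfold realBeta; rw [mul_comm, add_comm]
  have hexp : Real.exp (Real.log ((1 - κ) / κ) - μz) = (1 - κ) / (κ * γ) := by
    rw [Real.exp_sub, Real.exp_log (by positivity)]
    field_simp
    exact hγdef
  have hD : 0 < 1 + (γ - 1) * κ := by nlinarith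
  have h1p : 1 + (1 - κ) / (κ * γ) = (1 + (γ - 1) * κ) / (κ * γ) := by
    field_simp; ring
  rw [hexp, h1p, hBeq]
  have hκγ' : (0:ℝ) ≤ κ * γ := by positivity
  have e1 : ((1 - κ) / (κ * γ)) ^ α = (1 - κ) ^ α / (κ * γ) ^ α :=
    Real.div_rpow h1'.le hκγ' α
  have e2 : ((1 + (γ - 1) * κ) / (κ * γ)) ^ (-(α + β))
      = (1 + (γ - 1) * κ) ^ (-(α + β)) / (κ * γ) ^ (-(α + β)) :=
    Real.div_rpow hD.le hκγ' (-(α + β))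
  rw [e1, e2]
  have habs : |-(1 / (κ * (1 - κ)))| = 1 / (κ * (1 - κ)) := by
    rw [abs_neg, abs_of_pos (by positivity)]
  rw [habs]
  have hκγ : (0:ℝ) < κ * γ := by positivity
  have e3 : (κ * γ) ^ α * (κ * γ) ^ (-(α + β)) * (κ * γ) ^ β = 1 := by
    rw [← Real.rpow_add hκγ, ← Real.rpow_add hκγ]
    norm_num [Real.rpow_zero]
  have e4 : (κ * γ) ^ β = κ ^ β * γ ^ β := Real.mul_rpow h0.le hγ.le
  have e5 : κ ^ (β - 1) = κ ^ β / κ := Real.rpow_sub_one h0.ne' β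
  have e6 : (1 - κ) ^ (α - 1) = (1 - κ) ^ α / (1 - κ) := Real.rpow_sub_one h1'.ne' α
  rw [e5, e6]
  have e8 : ((κ * γ) ^ α)⁻¹ * ((κ * γ) ^ (-(α + β)))⁻¹ = κ ^ β * γ ^ β := by
    rw [← Real.rpow_neg hκγ', ← Real.rpow_neg hκγ', neg_neg, ← Real.rpow_add hκγ,
      show -α + (α + β) = β by ring, e4]
  simp only [div_eq_mul_inv, mul_inv]
  linear_combination (κ⁻¹ * (1 - κ)⁻¹ * (realBeta β α)⁻¹ * (1 - κ) ^ α
    * (1 + (γ - 1) * κ) ^ (-(α + β))) * e8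

/-- Proposition 2: for all `α, β > 0` and `μ_z ∈ ℝ`, the pushforward of `Z(α, β, μ_z, 1)` under
`η ↦ 1/(1 + e^{η})` is `TPB(β, α, exp(μ_z))`. -/
theorem z_map_eq_tpb (α β μz : ℝ) (hα : 0 < α) (hβ : 0 < β) :
    Measure.map (fun η : ℝ => 1 / (1 + Real.exp η)) (zMeasure α β μz)
      = tpbMeasure β α (Real.exp μz) := by
  set g : ℝ → ℝ := fun η => 1 / (1 + Real.exp η) with hg
  set ψ : ℝ → ℝ := fun κ => Real.log ((1 - κ) / κ) with hψ
  have hg_cont : Continuous g := by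
    apply Continuous.div continuous_const (by continuity)
    intro x; positivity
  have hg_meas : Measurable g := hg_cont.measurable
  -- g ∘ ψ = id on (0,1)
  have hgψ : ∀ κ ∈ Set.Ioo (0:ℝ) 1, g (ψ κ) = κ := by
    rintro κ ⟨h0, h1⟩
    simp only [hψ, hg]
    rw [Real.exp_log (div_pos (by linarith) h0)]
    rw [show (1:ℝ) + (1 - κ) / κ = 1 / κ by field_simp; ring, one_div_one_div]
  have hψg : ∀ η : ℝ, ψ (g η) = η := by
    intro η
    have he : 0 < 1 + Real.exp η := by positivity
    simp only [hψ, hg]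
    rw [show 1 - 1 / (1 + Real.exp η) = Real.exp η / (1 + Real.exp η) by field_simp; ring]
    rw [show Real.exp η / (1 + Real.exp η) / (1 / (1 + Real.exp η)) = Real.exp η by
      field_simp]
    exact Real.log_exp η
  have hg_mem : ∀ η : ℝ, g η ∈ Set.Ioo (0:ℝ) 1 := by
    intro η
    have he : 0 < Real.exp η := Real.exp_pos η
    constructor
    · positivity
    · rw [div_lt_one (by positivity)]; linarith
  ext s hs
  rw [Measure.map_apply hg_meas hs, zMeasure, withDensity_apply _ (hg_meas hs),
    tpbMeasure, withDensity_apply _ hs, Measure.restrict_restrict hs]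
  have himg : g ⁻¹' s = ψ '' (s ∩ Set.Ioo 0 1) := by
    ext η
    constructor
    · intro hη
      exact ⟨g η, ⟨hη, hg_mem η⟩, hψg η⟩
    · rintro ⟨κ, ⟨hκs, hκI⟩, rfl⟩
      simpa [Set.mem_preimage, hgψ κ hκI] using hκs
  rw [himg]
  have hmeas : MeasurableSet (s ∩ Set.Ioo (0:ℝ) 1) := hs.inter measurableSet_Ioo
  rw [lintegral_image_eq_lintegral_abs_deriv_mul' (f' := fun κ => -(1 / (κ * (1 - κ))))
    hmeas ?_ ?_]
  · apply setLIntegral_congr_fun hmeas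
    intro κ hκ; beta_reduce
    obtain ⟨-, h0, h1⟩ := hκ
    rw [← ENNReal.ofReal_mul (abs_nonneg _)]
    congr 1
    exact key_real α β μz κ hα hβ h0 h1
  · -- derivative
    intro x hx
    obtain ⟨-, h0, h1⟩ := hx
    have h1' : 0 < 1 - x := by linarith
    have hd : HasDerivAt (fun κ : ℝ => Real.log (1 - κ) - Real.log κ)
        (-(1 / (x * (1 - x)))) x := by
      have d1 : HasDerivAt (fun κ : ℝ => Real.log (1 - κ)) (-1 / (1 - x)) x := by
        have : HasDerivAt (fun κ : ℝ => 1 - κ) (-1) x := by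
          simpa using (hasDerivAt_id x).const_sub 1
        simpa using this.log h1'.ne'
      have d2 : HasDerivAt Real.log x⁻¹ x := Real.hasDerivAt_log h0.ne'
      have := d1.sub d2
      refine this.congr_deriv ?_
      field_simp
      ring
    apply HasDerivWithinAt.congr (hd.hasDerivWithinAt)
    · rintro y ⟨-, hy0, hy1⟩
      simp only [hψ]
      exact Real.log_div (by linarith) hy0.ne'
    · simp only [hψ]
      exact Real.log_div h1'.ne' h0.ne'
  · -- injectivity
    intro a ha b hb hab
    have := hgψ a ⟨ha.2.1, ha.2.2⟩
    rw [hab, hgψ b ⟨hb.2.1, hb.2.2⟩] at this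
    exact this.symm
end

section
/- (Theorem 1.) Fix real α, β > 0, φ, μ, h_t ∈ ℝ, and set τ² = e^{μ}, κ_t = 1/(1 + e^{h_t}). Let η be a random variable with distribution Z(α, β, 0, 1), and define h_{t+1} = μ + φ(h_t − μ) + η. Then the distribution of κ_{t+1} = 1/(1 + e^{h_{t+1}}) is TPB(β, α, γ_t) with γ_t = τ^{2(1−φ)} [(1 − κ_t)/κ_t]^{φ}; equivalently, the pushforward of Z(α, β, μ + φ(h_t − μ), 1) under η ↦ 1/(1+e^η) equals TPB(β, α, τ^{2(1−φ)} [(1 − κ_t)/κ_t]^{φ}). -/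
open Real MeasureTheory

/-- 1-D lintegral change of variables. -/
lemma lintegral_image_abs_deriv_mul {s : Set ℝ} {f : ℝ → ℝ} {f' : ℝ → ℝ}
    (hs : MeasurableSet s) (hf' : ∀ x ∈ s, HasDerivWithinAt f (f' x) s x)
    (hf : Set.InjOn f s) (g : ℝ → ENNReal) :
    ∫⁻ x in f '' s, g x = ∫⁻ x in s, ENNReal.ofReal |f' x| * g (f x) := by
  simpa only [ContinuousLinearMap.det_toSpanSingleton] using
    lintegral_image_eq_lintegral_abs_det_fderiv_mul volume hs
      (fun x hx => (hf' x hx).hasFDerivWithinAt) hf g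

lemma beta_symm (a b : ℝ) : realBeta a b = realBeta b a := by
  unfold realBeta; rw [add_comm, mul_comm]

/-- main computation lemma -/
lemma zmap_eq_tpb (α β m : ℝ) (hα : 0 < α) (hβ : 0 < β) :
    Measure.map (fun η : ℝ => 1 / (1 + Real.exp η)) (zMeasure α β m)
      = tpbMeasure β α (Real.exp m) := by
  set γ := Real.exp m with hγdef
  have hγ : 0 < γ := Real.exp_pos m
  set g : ℝ → ℝ := fun η => 1 / (1 + Real.exp η) with hgdef
  set h : ℝ → ℝ := fun κ => Real.log (1 - κ) - Real.log κ with hhdef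
  have hgmeas : Measurable g := by
    apply Measurable.div measurable_const
    exact measurable_const.add Real.measurable_exp
  have hgmem : ∀ η, g η ∈ Set.Ioo (0:ℝ) 1 := by
    intro η
    have h1 : (0:ℝ) < 1 + Real.exp η := by positivity
    constructor
    · positivity
    · rw [div_lt_one h1]; linarith [Real.exp_pos η]
  have hgh : ∀ κ ∈ Set.Ioo (0:ℝ) 1, g (h κ) = κ := by
    rintro κ ⟨h0, h1⟩
    simp only [hgdef, hhdef]
    rw [Real.exp_sub, Real.exp_log (by linarith), Real.exp_log h0]
    field_simp
    ring
  have hhg : ∀ η, h (g η) = η := by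
    intro η
    have h1 : (0:ℝ) < 1 + Real.exp η := by positivity
    simp only [hgdef, hhdef]
    have e1 : 1 - 1 / (1 + Real.exp η) = Real.exp η / (1 + Real.exp η) := by
      field_simp
      ring
    rw [e1, Real.log_div (Real.exp_ne_zero η) (ne_of_gt h1),
      Real.log_exp, one_div, Real.log_inv]
    ring
  ext s hs
  rw [Measure.map_apply hgmeas hs, zMeasure, tpbMeasure,
    withDensity_apply _ (hgmeas hs), withDensity_apply _ hs,
    Measure.restrict_restrict hs]
  set A := s ∩ Set.Ioo (0:ℝ) 1 with hAdef
  have hA : MeasurableSet A := hs.inter measurableSet_Ioo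
  have himg : h '' A = g ⁻¹' s := by
    ext η
    constructor
    · rintro ⟨κ, ⟨hκs, hκI⟩, rfl⟩
      simpa [Set.mem_preimage, hgh κ hκI] using hκs
    · intro hη
      exact ⟨g η, ⟨hη, hgmem η⟩, hhg η⟩
  have hinj : Set.InjOn h A := by
    intro a ha b hb hab
    rw [← hgh a ha.2, ← hgh b hb.2, hab]
  have hder : ∀ κ ∈ A, HasDerivWithinAt h (-(1 - κ)⁻¹ - κ⁻¹) A κ := by
    rintro κ ⟨-, h0, h1⟩
    have d1 : HasDerivAt (fun x : ℝ => Real.log (1 - x)) (-(1 - κ)⁻¹) κ := by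
      have := (Real.hasDerivAt_log (x := 1 - κ) (by linarith)).comp κ
        ((hasDerivAt_id κ).const_sub 1)
      simpa [Function.comp_def] using this
    exact ((d1.sub (Real.hasDerivAt_log (ne_of_gt h0))).hasDerivWithinAt)
  rw [← himg, lintegral_image_abs_deriv_mul hA hder hinj]
  apply setLIntegral_congr_fun hA
  rintro κ ⟨-, h0, h1⟩
  dsimp only
  have hb0 : (0:ℝ) < 1 - κ := by linarith
  have hD : (0:ℝ) < 1 + (γ - 1) * κ := by nlinarith
  -- absolute value of derivative
  have habs : |-(1 - κ)⁻¹ - κ⁻¹| = (κ * (1 - κ))⁻¹ := by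
    rw [abs_of_neg (by
      have : (0:ℝ) < (1 - κ)⁻¹ := by positivity
      have : (0:ℝ) < κ⁻¹ := by positivity
      linarith)]
    field_simp
    ring
  -- the argument of the z-density
  have harg : Real.exp (h κ - m) = (1 - κ) / (κ * γ) := by
    simp only [hhdef]
    rw [sub_sub, Real.exp_sub, Real.exp_log hb0, Real.exp_add, Real.exp_log h0, hγdef]
  have hsum : 1 + (1 - κ) / (κ * γ) = (1 + (γ - 1) * κ) / (κ * γ) := by
    field_simp; ring
  rw [habs, harg, hsum]
  rw [← ENNReal.ofReal_mul (by positivity)]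
  congr 1
  rw [beta_symm β α]
  have e1 : ((1 - κ) / (κ * γ)) ^ α = (1 - κ) ^ α / (κ ^ α * γ ^ α) := by
    rw [Real.div_rpow hb0.le (by positivity), Real.mul_rpow h0.le hγ.le]
  have e2 : ((1 + (γ - 1) * κ) / (κ * γ)) ^ (-(α + β))
      = (κ ^ α * κ ^ β * (γ ^ α * γ ^ β)) / (1 + (γ - 1) * κ) ^ (α + β) := by
    rw [Real.rpow_neg (by positivity), Real.div_rpow hD.le (by positivity),
      Real.mul_rpow h0.le hγ.le, Real.rpow_add h0, Real.rpow_add hγ]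
    field_simp
  have e3 : κ ^ (β - 1) = κ ^ β / κ := by
    rw [Real.rpow_sub h0, Real.rpow_one]
  have e4 : (1 - κ) ^ (α - 1) = (1 - κ) ^ α / (1 - κ) := by
    rw [Real.rpow_sub hb0, Real.rpow_one]
  have e5 : (1 + (γ - 1) * κ) ^ (-(α + β)) = ((1 + (γ - 1) * κ) ^ (α + β))⁻¹ := by
    rw [Real.rpow_neg hD.le]
  rw [e1, e2, e3, e4, e5]
  have p1 : (0:ℝ) < κ ^ α := Real.rpow_pos_of_pos h0 α
  have p2 : (0:ℝ) < κ ^ β := Real.rpow_pos_of_pos h0 β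
  have p3 : (0:ℝ) < γ ^ α := Real.rpow_pos_of_pos hγ α
  have p4 : (0:ℝ) < γ ^ β := Real.rpow_pos_of_pos hγ β
  have p5 : (0:ℝ) < (1 - κ) ^ α := Real.rpow_pos_of_pos hb0 α
  have p6 : (0:ℝ) < (1 + (γ - 1) * κ) ^ (α + β) := Real.rpow_pos_of_pos hD (α + β)
  have hB : (0:ℝ) < realBeta α β := by
    unfold realBeta
    exact div_pos (mul_pos (Real.Gamma_pos_of_pos hα) (Real.Gamma_pos_of_pos hβ))
      (Real.Gamma_pos_of_pos (by linarith))
  field_simp [hB.ne', p1.ne', p2.ne', p3.ne', p4.ne', p5.ne', p6.ne', h0.ne', hb0.ne']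

/-- Theorem 1. -/
theorem dhs_conditional_tpb (α β φ μ ht : ℝ) (hα : 0 < α) (hβ : 0 < β) :
    Measure.map (fun η : ℝ => 1 / (1 + Real.exp η)) (zMeasure α β (μ + φ * (ht - μ)))
      = tpbMeasure β α
          ((Real.exp μ) ^ (1 - φ)
            * ((1 - 1 / (1 + Real.exp ht)) / (1 / (1 + Real.exp ht))) ^ φ) := by
  have h1 : (0:ℝ) < 1 + Real.exp ht := by positivity
  have hfrac : (1 - 1 / (1 + Real.exp ht)) / (1 / (1 + Real.exp ht)) = Real.exp ht := by
    field_simp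
    ring
  have hγ : (Real.exp μ) ^ (1 - φ)
      * ((1 - 1 / (1 + Real.exp ht)) / (1 / (1 + Real.exp ht))) ^ φ
      = Real.exp (μ + φ * (ht - μ)) := by
    rw [hfrac, ← Real.exp_one_rpow μ, ← Real.exp_one_rpow ht,
      ← Real.rpow_mul (Real.exp_pos 1).le, ← Real.rpow_mul (Real.exp_pos 1).le,
      ← Real.rpow_add (Real.exp_pos 1), Real.exp_one_rpow]
    congr 1
    ring
  rw [hγ]
  exact zmap_eq_tpb α β _ hα hβ
end

section
/- For all real γ > 1 and ε ∈ (0, 1), ∫_ε^1 π⁻¹ γ^{1/2} κ^{−1/2} (1−κ)^{−1/2} [1 + (γ−1)κ]⁻¹ dκ ≤ (2/π) ε^{−1/2} (1 − ε)^{1/2} γ^{1/2} / [1 + (γ−1)ε]. In particular, the TPB(1/2, 1/2, γ) probability of the interval (ε, 1) is bounded above by (2/π) ε^{−1/2} (1 − ε)^{1/2} γ^{1/2} / [1 + (γ−1)ε]. -/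
open Real MeasureTheory

/-- Key estimate of Theorem 2: for all `γ > 1` and `ε ∈ (0, 1)`,
`∫_ε^1 π⁻¹ γ^{1/2} κ^{−1/2} (1−κ)^{−1/2} [1 + (γ−1)κ]⁻¹ dκ
  ≤ (2/π) ε^{−1/2} (1 − ε)^{1/2} γ^{1/2} / [1 + (γ−1)ε]`,
i.e. the `TPB(1/2, 1/2, γ)` probability of `(ε, 1)` is bounded by the right-hand side. -/
theorem tpb_half_tail_bound (γ ε : ℝ) (hγ : 1 < γ) (hε : ε ∈ Set.Ioo (0:ℝ) 1) :
    (∫ κ in Set.Ioo ε 1,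
        π⁻¹ * γ ^ ((1:ℝ)/2) * κ ^ (-(1:ℝ)/2) * (1 - κ) ^ (-(1:ℝ)/2)
          * (1 + (γ - 1) * κ)⁻¹)
      ≤ (2 / π) * ε ^ (-(1:ℝ)/2) * (1 - ε) ^ ((1:ℝ)/2) * γ ^ ((1:ℝ)/2)
          / (1 + (γ - 1) * ε) := by
  obtain ⟨hε0, hε1⟩ := hε
  have hγ0 : (0:ℝ) < γ := lt_trans one_pos hγ
  have hγ1 : (0:ℝ) < γ - 1 := sub_pos.mpr hγ
  have hden : (0:ℝ) < 1 + (γ - 1) * ε := by positivity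
  set C : ℝ := π⁻¹ * γ ^ ((1:ℝ)/2) * ε ^ (-(1:ℝ)/2) * (1 + (γ - 1) * ε)⁻¹ with hC
  have hC0 : 0 ≤ C := by rw [hC]; positivity
  -- integrability of the dominating function
  have hg_ii : IntervalIntegrable (fun κ : ℝ => (1 - κ) ^ (-(1:ℝ)/2)) volume ε 1 := by
    have h := (intervalIntegral.intervalIntegrable_rpow'
      (a := (0:ℝ)) (b := 1 - ε) (r := -(1:ℝ)/2) (by norm_num)).comp_sub_left 1
    simpa using h.symm
  have hg_int : IntegrableOn (fun κ : ℝ => (1 - κ) ^ (-(1:ℝ)/2)) (Set.Ioo ε 1) :=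
    hg_ii.1.mono_set Set.Ioo_subset_Ioc_self
  -- pointwise bound
  have key : ∀ κ ∈ Set.Ioo ε 1,
      π⁻¹ * γ ^ ((1:ℝ)/2) * κ ^ (-(1:ℝ)/2) * (1 - κ) ^ (-(1:ℝ)/2) * (1 + (γ - 1) * κ)⁻¹
        ≤ C * (1 - κ) ^ (-(1:ℝ)/2) := by
    intro κ hκ
    have hk0 : 0 < κ := hε0.trans hκ.1
    have h1k : 0 < 1 - κ := by linarith [hκ.2]
    have hdenκ : (0:ℝ) < 1 + (γ - 1) * κ := by positivity
    have h1 : κ ^ (-(1:ℝ)/2) ≤ ε ^ (-(1:ℝ)/2) :=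
      Real.rpow_le_rpow_of_nonpos hε0 hκ.1.le (by norm_num)
    have h2 : (1 + (γ - 1) * κ)⁻¹ ≤ (1 + (γ - 1) * ε)⁻¹ := by
      apply inv_anti₀ hden
      nlinarith [hκ.1]
    calc π⁻¹ * γ ^ ((1:ℝ)/2) * κ ^ (-(1:ℝ)/2) * (1 - κ) ^ (-(1:ℝ)/2) * (1 + (γ - 1) * κ)⁻¹
        ≤ π⁻¹ * γ ^ ((1:ℝ)/2) * ε ^ (-(1:ℝ)/2) * (1 - κ) ^ (-(1:ℝ)/2) * (1 + (γ - 1) * ε)⁻¹ := by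
          gcongr
      _ = C * (1 - κ) ^ (-(1:ℝ)/2) := by rw [hC]; ring
  -- integrability of the integrand
  have hf_int : IntegrableOn
      (fun κ : ℝ => π⁻¹ * γ ^ ((1:ℝ)/2) * κ ^ (-(1:ℝ)/2) * (1 - κ) ^ (-(1:ℝ)/2)
        * (1 + (γ - 1) * κ)⁻¹) (Set.Ioo ε 1) := by
    apply Integrable.mono' (hg_int.const_mul C)
    · apply ContinuousOn.aestronglyMeasurable _ measurableSet_Ioo
      refine (((continuousOn_const.mul (continuousOn_id.rpow_const ?_)).mul
        ((continuousOn_const.sub continuousOn_id).rpow_const ?_)).mul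
        (ContinuousOn.inv₀ (by fun_prop) ?_))
      · intro x hx; left; exact ne_of_gt (hε0.trans hx.1)
      · intro x hx; left; simp only [Pi.sub_apply, id]; intro h; have : (1:ℝ) - x > 0 := by linarith [hx.2]
        linarith
      · intro x hx
        have hx0 : 0 < x := hε0.trans hx.1
        positivity
    · rw [ae_restrict_iff' measurableSet_Ioo]
      filter_upwards with κ hκ
      have hk0 : 0 < κ := hε0.trans hκ.1
      have h1k : 0 < 1 - κ := by linarith [hκ.2]
      rw [Real.norm_eq_abs, abs_of_nonneg (by positivity)]
      exact key κ hκ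
  -- compute the dominating integral
  have hval : ∫ κ in Set.Ioo ε 1, (1 - κ) ^ (-(1:ℝ)/2) = 2 * (1 - ε) ^ ((1:ℝ)/2) := by
    rw [← integral_Ioc_eq_integral_Ioo, ← intervalIntegral.integral_of_le hε1.le]
    have h := intervalIntegral.integral_comp_sub_left (a := ε) (b := 1)
      (fun x : ℝ => x ^ (-(1:ℝ)/2)) 1
    rw [h, integral_rpow (Or.inl (by norm_num))]
    rw [show -(1:ℝ)/2 + 1 = (1:ℝ)/2 by norm_num]
    rw [show (1:ℝ) - 1 = 0 by norm_num, Real.zero_rpow (by norm_num)]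
    ring
  calc (∫ κ in Set.Ioo ε 1,
        π⁻¹ * γ ^ ((1:ℝ)/2) * κ ^ (-(1:ℝ)/2) * (1 - κ) ^ (-(1:ℝ)/2) * (1 + (γ - 1) * κ)⁻¹)
      ≤ ∫ κ in Set.Ioo ε 1, C * (1 - κ) ^ (-(1:ℝ)/2) :=
        setIntegral_mono_on hf_int (hg_int.const_mul C) measurableSet_Ioo key
    _ = C * ∫ κ in Set.Ioo ε 1, (1 - κ) ^ (-(1:ℝ)/2) := by rw [MeasureTheory.integral_const_mul]
    _ = C * (2 * (1 - ε) ^ ((1:ℝ)/2)) := by rw [hval]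
    _ = (2 / π) * ε ^ (-(1:ℝ)/2) * (1 - ε) ^ ((1:ℝ)/2) * γ ^ ((1:ℝ)/2)
          / (1 + (γ - 1) * ε) := by
        rw [hC, div_eq_mul_inv, div_eq_mul_inv]; ring
end

section
/- (Theorem 3(b).) For y ∈ ℝ and γ > 0 define g_{y,γ}(κ) = (1−κ)^{−1/2} [1 + (γ−1)κ]⁻¹ exp(−y²κ/2) for κ ∈ (0, 1). Then for every fixed γ ∈ (0, 1) and ε ∈ (0, 1), ∫_ε^1 g_{y,γ}(κ) dκ / ∫₀¹ g_{y,γ}(κ) dκ → 0 as |y| → ∞. Equivalently, the normalized posterior probability that κ < ε tends to 1 as |y| → ∞. -/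
open Real MeasureTheory Filter

/-- The unnormalized posterior density of the shrinkage parameter `κ` under the conditional
`TPB(1/2, 1/2, γ)` prior and the marginal likelihood `[y | κ] ~ N(0, κ⁻¹)`:
`g_{y,γ}(κ) = (1−κ)^{−1/2} [1 + (γ−1)κ]⁻¹ exp(−y²κ/2)`. -/
noncomputable def gPost (y γ κ : ℝ) : ℝ :=
  (1 - κ) ^ (-(1:ℝ)/2) * (1 + (γ - 1) * κ)⁻¹ * Real.exp (-y ^ 2 * κ / 2)

/-- Integrability of the singular factor `(1-κ)^{-1/2}` on `(0,1)`. -/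
lemma integrableOn_rpow_aux :
    IntegrableOn (fun κ : ℝ => (1 - κ) ^ (-(1:ℝ)/2)) (Set.Ioo (0:ℝ) 1) := by
  have h := (intervalIntegral.intervalIntegrable_rpow'
      (r := -(1:ℝ)/2) (by norm_num) (a := 0) (b := 1)).comp_sub_left 1
  simp only [sub_zero, sub_self] at h
  have h' := (intervalIntegrable_iff_integrableOn_Ioc_of_le (by norm_num : (0:ℝ) ≤ 1)).mp h.symm
  exact h'.mono_set Set.Ioo_subset_Ioc_self

lemma gPost_measurable (y γ : ℝ) : Measurable (gPost y γ) := by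
  unfold gPost
  fun_prop

section Pointwise

variable {γ ε y κ : ℝ}

lemma aux_denom_bounds (hγ : γ ∈ Set.Ioo (0:ℝ) 1) (hκ : κ ∈ Set.Ioo (0:ℝ) 1) :
    γ ≤ 1 + (γ - 1) * κ ∧ 1 + (γ - 1) * κ ≤ 1 := by
  obtain ⟨hγ0, hγ1⟩ := hγ
  obtain ⟨hκ0, hκ1⟩ := hκ
  constructor <;> nlinarith

lemma gPost_nonneg (hγ : γ ∈ Set.Ioo (0:ℝ) 1) (hκ : κ ∈ Set.Ioo (0:ℝ) 1) :
    0 ≤ gPost y γ κ := by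
  have h := aux_denom_bounds hγ hκ
  have h0 : (0:ℝ) < 1 + (γ - 1) * κ := lt_of_lt_of_le hγ.1 h.1
  have h1 : (0:ℝ) < 1 - κ := by linarith [hκ.2]
  unfold gPost
  positivity

lemma gPost_le_bound (hγ : γ ∈ Set.Ioo (0:ℝ) 1) (hκ : κ ∈ Set.Ioo (0:ℝ) 1) (e : ℝ)
    (he : -y ^ 2 * κ / 2 ≤ e) :
    gPost y γ κ ≤ (1 - κ) ^ (-(1:ℝ)/2) * γ⁻¹ * Real.exp e := by
  have h := aux_denom_bounds hγ hκ
  have h0 : (0:ℝ) < 1 + (γ - 1) * κ := lt_of_lt_of_le hγ.1 h.1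
  have hA : (0:ℝ) ≤ (1 - κ) ^ (-(1:ℝ)/2) :=
    Real.rpow_nonneg (by linarith [hκ.2]) _
  have hB : (1 + (γ - 1) * κ)⁻¹ ≤ γ⁻¹ := inv_anti₀ hγ.1 h.1
  have hE : Real.exp (-y ^ 2 * κ / 2) ≤ Real.exp e := Real.exp_le_exp.mpr he
  unfold gPost
  have h1 : (1 - κ) ^ (-(1:ℝ)/2) * (1 + (γ - 1) * κ)⁻¹ ≤ (1 - κ) ^ (-(1:ℝ)/2) * γ⁻¹ :=
    mul_le_mul_of_nonneg_left hB hA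
  exact mul_le_mul h1 hE (Real.exp_nonneg _) (mul_nonneg hA (inv_nonneg.mpr hγ.1.le))

lemma gPost_ge_exp (hγ : γ ∈ Set.Ioo (0:ℝ) 1) (hκ : κ ∈ Set.Ioo (0:ℝ) 1) :
    Real.exp (-y ^ 2 * κ / 2) ≤ gPost y γ κ := by
  have h := aux_denom_bounds hγ hκ
  have h0 : (0:ℝ) < 1 + (γ - 1) * κ := lt_of_lt_of_le hγ.1 h.1
  have hA : (1:ℝ) ≤ (1 - κ) ^ (-(1:ℝ)/2) :=
    Real.one_le_rpow_of_pos_of_le_one_of_nonpos (by linarith [hκ.2]) (by linarith [hκ.1])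
      (by norm_num)
  have hB : (1:ℝ) ≤ (1 + (γ - 1) * κ)⁻¹ := (one_le_inv₀ h0).mpr h.2
  have hE : (0:ℝ) ≤ Real.exp (-y ^ 2 * κ / 2) := Real.exp_nonneg _
  unfold gPost
  have h2 : (1:ℝ) * 1 ≤ (1 - κ) ^ (-(1:ℝ)/2) * (1 + (γ - 1) * κ)⁻¹ :=
    mul_le_mul hA hB zero_le_one (le_trans zero_le_one hA)
  have := mul_le_mul_of_nonneg_right h2 hE
  simpa using this

end Pointwise

/-- Theorem 3(b): for every fixed `γ ∈ (0, 1)` and `ε ∈ (0, 1)`,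
`∫_ε^1 g_{y,γ}(κ) dκ / ∫₀¹ g_{y,γ}(κ) dκ → 0` as `|y| → ∞`; equivalently, the normalized
posterior probability that `κ < ε` tends to `1` as `|y| → ∞`. -/
theorem dhs_posterior_robustness (γ ε : ℝ) (hγ : γ ∈ Set.Ioo (0:ℝ) 1)
    (hε : ε ∈ Set.Ioo (0:ℝ) 1) :
    Tendsto (fun y : ℝ =>
        (∫ κ in Set.Ioo ε 1, gPost y γ κ) / (∫ κ in Set.Ioo (0:ℝ) 1, gPost y γ κ))
      (Filter.cocompact ℝ) (nhds 0) := by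
  obtain ⟨hγ0, hγ1⟩ := hγ
  obtain ⟨hε0, hε1⟩ := hε
  have hγm : γ ∈ Set.Ioo (0:ℝ) 1 := ⟨hγ0, hγ1⟩
  set δ : ℝ := ε / 2 with hδdef
  have hδ0 : 0 < δ := by positivity
  set C : ℝ := ∫ κ in Set.Ioo ε 1, (1 - κ) ^ (-(1:ℝ)/2) * γ⁻¹ with hCdef
  have hsub1 : Set.Ioo ε 1 ⊆ Set.Ioo (0:ℝ) 1 := Set.Ioo_subset_Ioo hε0.le le_rfl
  have hsub2 : Set.Ioo (0:ℝ) δ ⊆ Set.Ioo (0:ℝ) 1 :=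
    Set.Ioo_subset_Ioo le_rfl (by linarith)
  -- integrability facts
  have hb_int : IntegrableOn (fun κ : ℝ => (1 - κ) ^ (-(1:ℝ)/2) * γ⁻¹) (Set.Ioo (0:ℝ) 1) :=
    integrableOn_rpow_aux.mul_const _
  have hg_int : ∀ y : ℝ, IntegrableOn (gPost y γ) (Set.Ioo (0:ℝ) 1) := by
    intro y
    refine hb_int.mono' ((gPost_measurable y γ).aestronglyMeasurable.restrict) ?_
    filter_upwards [ae_restrict_mem measurableSet_Ioo] with κ hκ
    rw [Real.norm_eq_abs, abs_of_nonneg (gPost_nonneg hγm hκ)]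
    have := gPost_le_bound (y := y) hγm hκ 0 (by nlinarith [sq_nonneg y, hκ.1.le])
    simpa using this
  have hC0 : 0 ≤ C := by
    refine setIntegral_nonneg measurableSet_Ioo fun κ hκ => ?_
    have h1 : (0:ℝ) ≤ 1 - κ := by linarith [hκ.2]
    positivity
  -- numerator bound
  have hNum : ∀ y : ℝ, (∫ κ in Set.Ioo ε 1, gPost y γ κ) ≤ C * Real.exp (-y ^ 2 * ε / 2) := by
    intro y
    have hle : (∫ κ in Set.Ioo ε 1, gPost y γ κ) ≤
        ∫ κ in Set.Ioo ε 1, ((1 - κ) ^ (-(1:ℝ)/2) * γ⁻¹) * Real.exp (-y ^ 2 * ε / 2) := by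
      refine setIntegral_mono_on ((hg_int y).mono_set hsub1)
        ((hb_int.mono_set hsub1).mul_const _) measurableSet_Ioo fun κ hκ => ?_
      refine gPost_le_bound hγm (hsub1 hκ) _ ?_
      have hy : (0:ℝ) ≤ y ^ 2 := sq_nonneg y
      have := hκ.1.le
      rw [div_le_div_iff_of_pos_right (by norm_num : (0:ℝ) < 2)]
      nlinarith
    calc (∫ κ in Set.Ioo ε 1, gPost y γ κ) ≤ _ := hle
      _ = C * Real.exp (-y ^ 2 * ε / 2) := by rw [hCdef, ← integral_mul_const]
  -- denominator lower bound
  have hDen : ∀ y : ℝ, δ * Real.exp (-y ^ 2 * δ / 2) ≤ ∫ κ in Set.Ioo (0:ℝ) 1, gPost y γ κ := by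
    intro y
    have hexp_int : IntegrableOn (fun κ : ℝ => Real.exp (-y ^ 2 * κ / 2)) (Set.Ioo (0:ℝ) δ) :=
      ((Real.continuous_exp.comp (by continuity)).integrableOn_Icc).mono_set
        Set.Ioo_subset_Icc_self
    have h1 : δ * Real.exp (-y ^ 2 * δ / 2) ≤
        ∫ κ in Set.Ioo (0:ℝ) δ, Real.exp (-y ^ 2 * κ / 2) := by
      have hconst : (∫ _κ in Set.Ioo (0:ℝ) δ, Real.exp (-y ^ 2 * δ / 2)) =
          δ * Real.exp (-y ^ 2 * δ / 2) := by
        rw [setIntegral_const, Real.volume_real_Ioo_of_le hδ0.le, smul_eq_mul, sub_zero]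
      rw [← hconst]
      refine setIntegral_mono_on (integrableOn_const ?_) hexp_int measurableSet_Ioo
        fun κ hκ => ?_
      · rw [Real.volume_Ioo]; exact ENNReal.ofReal_ne_top
      · refine Real.exp_le_exp.mpr ?_
        have hy : (0:ℝ) ≤ y ^ 2 := sq_nonneg y
        have := hκ.2.le
        nlinarith
    have h2 : (∫ κ in Set.Ioo (0:ℝ) δ, Real.exp (-y ^ 2 * κ / 2)) ≤
        ∫ κ in Set.Ioo (0:ℝ) δ, gPost y γ κ := by
      refine setIntegral_mono_on hexp_int ((hg_int y).mono_set hsub2) measurableSet_Ioo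
        fun κ hκ => gPost_ge_exp hγm (hsub2 hκ)
    have h3 : (∫ κ in Set.Ioo (0:ℝ) δ, gPost y γ κ) ≤ ∫ κ in Set.Ioo (0:ℝ) 1, gPost y γ κ := by
      refine setIntegral_mono_set (hg_int y) ?_ (HasSubset.Subset.eventuallyLE hsub2)
      filter_upwards [ae_restrict_mem measurableSet_Ioo] with κ hκ
      exact gPost_nonneg hγm hκ
    linarith
  -- bounding function and squeeze
  have hbound : ∀ y : ℝ,
      (∫ κ in Set.Ioo ε 1, gPost y γ κ) / (∫ κ in Set.Ioo (0:ℝ) 1, gPost y γ κ) ≤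
        (C / δ) * Real.exp (-y ^ 2 * δ / 2) := by
    intro y
    have hdpos : 0 < δ * Real.exp (-y ^ 2 * δ / 2) := by positivity
    have h := div_le_div₀ (by positivity) (hNum y) hdpos (hDen y)
    calc (∫ κ in Set.Ioo ε 1, gPost y γ κ) / (∫ κ in Set.Ioo (0:ℝ) 1, gPost y γ κ) ≤
        (C * Real.exp (-y ^ 2 * ε / 2)) / (δ * Real.exp (-y ^ 2 * δ / 2)) := h
      _ = (C / δ) * Real.exp (-y ^ 2 * δ / 2) := by
          rw [mul_div_mul_comm, ← Real.exp_sub]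
          congr 1
          rw [hδdef]; ring
  have hnn : ∀ y : ℝ,
      0 ≤ (∫ κ in Set.Ioo ε 1, gPost y γ κ) / (∫ κ in Set.Ioo (0:ℝ) 1, gPost y γ κ) := by
    intro y
    refine div_nonneg ?_ ?_ <;>
      exact setIntegral_nonneg measurableSet_Ioo fun κ hκ =>
        gPost_nonneg hγm (by first | exact hsub1 hκ | exact hκ)
  refine squeeze_zero hnn hbound ?_
  have hsq : Tendsto (fun y : ℝ => y ^ 2) (cocompact ℝ) atTop := by
    have := (tendsto_pow_atTop (n := 2) two_ne_zero).comp
      (tendsto_norm_cocompact_atTop : Tendsto norm (cocompact ℝ) atTop)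
    simpa [Function.comp_def, Real.norm_eq_abs, sq_abs] using this
  have hlin : Tendsto (fun t : ℝ => -t * δ / 2) atTop atBot := by
    have h : Tendsto (fun t : ℝ => t * -(δ / 2)) atTop atBot :=
      Tendsto.atTop_mul_const_of_neg (by linarith) tendsto_id
    refine h.congr' (Eventually.of_forall fun t => ?_)
    simp only [id]; ring
  have hexp : Tendsto (fun y : ℝ => Real.exp (-y ^ 2 * δ / 2)) (cocompact ℝ) (nhds 0) :=
    Real.tendsto_exp_atBot.comp (hlin.comp hsq)
  have := hexp.const_mul (C / δ)
  simpa using this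
end
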